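/- Let a ≥ b ≥ c ≥ 1 with a ≥ b + c + 1. Then the region {(x,y) : |x| ≤ 1/2, |y| ≤ 1/2, (1-c)/2 ≤ ax + by ≤ (1+c)/2}, which is the projection onto the (x,y)-plane of the face at t = -1/2 of the slice of Q = [-1/2,1/2]^4 by H : ax + by + cz + t = 0, is the parallelogram with vertices ((b-c+1)/(2a), -1/2), ((c+1+b)/(2a), -1/2), ((c+1-b)/(2a), 1/2), ((1-b-c)/(2a), 1/2). -/

import Mathlib

set_option maxHeartbeats 1000000


theorem face_parallelogram_general (a b c : ℝ)
    (hab : a ≥ b) (hbc : b ≥ c) (hc1 : c ≥ 1) (h : a ≥ b + c + 1) :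
    {q : ℝ × ℝ | |q.1| ≤ 1/2 ∧ |q.2| ≤ 1/2 ∧
        (1 - c)/2 ≤ a * q.1 + b * q.2 ∧ a * q.1 + b * q.2 ≤ (1 + c)/2}
      = convexHull ℝ {((b - c + 1)/(2*a), -(1/2)), ((c + 1 + b)/(2*a), -(1/2)),
          ((c + 1 - b)/(2*a), 1/2), ((1 - b - c)/(2*a), 1/2)} := by
  have hc : (0:ℝ) < c := by linarith
  have hb : (0:ℝ) < b := by linarith
  have ha : (0:ℝ) < a := by linarith
  set v1 : ℝ × ℝ := ((b - c + 1)/(2*a), -(1/2)) with hv1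
  set v2 : ℝ × ℝ := ((c + 1 + b)/(2*a), -(1/2)) with hv2
  set v3 : ℝ × ℝ := ((c + 1 - b)/(2*a), 1/2) with hv3
  set v4 : ℝ × ℝ := ((1 - b - c)/(2*a), 1/2) with hv4
  set T : Set (ℝ × ℝ) := {v1, v2, v3, v4} with hT
  apply Set.Subset.antisymm
  · intro p hp
    obtain ⟨hx, hy, hl, hu⟩ := hp
    rw [abs_le] at hx hy
    set lam := (a * p.1 + b * p.2 - (1 - c)/2)/c with hlam
    set mu := p.2 + 1/2 with hmu
    have hlam0 : 0 ≤ lam := div_nonneg (by linarith) hc.le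
    have hlam1 : lam ≤ 1 := by rw [hlam, div_le_one hc]; linarith
    have hmu0 : 0 ≤ mu := by rw [hmu]; linarith [hy.1]
    have hmu1 : mu ≤ 1 := by rw [hmu]; linarith [hy.2]
    have hconv := convex_convexHull ℝ T
    have h1 : v1 ∈ convexHull ℝ T := subset_convexHull ℝ T (by simp [hT])
    have h2 : v2 ∈ convexHull ℝ T := subset_convexHull ℝ T (by simp [hT])
    have h3 : v3 ∈ convexHull ℝ T := subset_convexHull ℝ T (by simp [hT])
    have h4 : v4 ∈ convexHull ℝ T := subset_convexHull ℝ T (by simp [hT])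
    have hA : (1 - lam) • v1 + lam • v2 ∈ convexHull ℝ T :=
      hconv h1 h2 (by linarith) hlam0 (by ring)
    have hB : (1 - lam) • v4 + lam • v3 ∈ convexHull ℝ T :=
      hconv h4 h3 (by linarith) hlam0 (by ring)
    have key : p = (1 - mu) • ((1 - lam) • v1 + lam • v2)
        + mu • ((1 - lam) • v4 + lam • v3) := by
      apply Prod.ext
      · simp only [hv1, hv2, hv3, hv4, hlam, hmu, Prod.smul_mk, Prod.mk_add_mk,
          smul_eq_mul]
        field_simp
        ring
      · simp only [hv1, hv2, hv3, hv4, hmu, Prod.smul_mk, Prod.mk_add_mk,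
          smul_eq_mul]
        ring
    rw [key]
    exact hconv hA hB (by linarith) hmu0 (by ring)
  · apply convexHull_min
    · have hm : ∀ x : ℝ, a * (x/(2*a)) = x/2 := by
        intro x; field_simp
      have habs : ∀ x : ℝ, -a ≤ x → x ≤ a → |x/(2*a)| ≤ 1/2 := by
        intro x hx0 hxa
        rw [abs_le]
        constructor
        · rw [le_div_iff₀ (by linarith)]; nlinarith
        · rw [div_le_iff₀ (by linarith)]; nlinarith
      have hhalf : |(-(1/2) : ℝ)| ≤ 1/2 := by rw [abs_le]; norm_num
      have hhalf' : |(1/2 : ℝ)| ≤ 1/2 := by rw [abs_le]; norm_num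
      intro q hq
      simp only [hT, Set.mem_insert_iff, Set.mem_singleton_iff] at hq
      rcases hq with h' | h' | h' | h' <;> subst h' <;>
          simp only [hv1, hv2, hv3, hv4, Set.mem_setOf_eq, hm]
      · exact ⟨habs _ (by linarith) (by linarith), hhalf, by linarith, by linarith⟩
      · exact ⟨habs _ (by linarith) (by linarith), hhalf, by linarith, by linarith⟩
      · exact ⟨habs _ (by linarith) (by linarith), hhalf', by linarith, by linarith⟩
      · exact ⟨habs _ (by linarith) (by linarith), hhalf', by linarith, by linarith⟩
    · clear_value v1 v2 v3 v4 T
      clear hT hv1 hv2 hv3 hv4 T v1 v2 v3 v4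
      rintro ⟨x1, y1⟩ hp ⟨x2, y2⟩ hq u v hu hv huv
      obtain ⟨hx1, hy1, hl1, hu1⟩ := hp
      obtain ⟨hx2, hy2, hl2, hu2⟩ := hq
      rw [abs_le] at hx1 hy1 hx2 hy2
      have b1 := mul_le_mul_of_nonneg_left hx1.2 hu
      have b2 := mul_le_mul_of_nonneg_left hx1.1 hu
      have b3 := mul_le_mul_of_nonneg_left hx2.2 hv
      have b4 := mul_le_mul_of_nonneg_left hx2.1 hv
      have c1 := mul_le_mul_of_nonneg_left hy1.2 hu
      have c2 := mul_le_mul_of_nonneg_left hy1.1 hu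
      have c3 := mul_le_mul_of_nonneg_left hy2.2 hv
      have c4 := mul_le_mul_of_nonneg_left hy2.1 hv
      have d1 := mul_le_mul_of_nonneg_left hu1 hu
      have d2 := mul_le_mul_of_nonneg_left hl1 hu
      have d3 := mul_le_mul_of_nonneg_left hu2 hv
      have d4 := mul_le_mul_of_nonneg_left hl2 hv
      have hcu : u * c + v * c = c := by rw [← add_mul, huv, one_mul]
      simp only [Set.mem_setOf_eq, Prod.smul_mk, Prod.mk_add_mk, smul_eq_mul, abs_le]
      refine ⟨⟨by linarith, by linarith⟩, ⟨by linarith, by linarith⟩,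
        by linarith, by linarith⟩
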